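/- Let p be an odd prime, k a positive integer, t an odd positive integer, and let μ be a nonzero element of F_{p^{2k}} with μ^{p^k} = −μ. Then the number of pairs (x,y) ∈ F_{p^{2kt}} × F_{p^{2kt}} satisfying y^{p^k} − y = μ·x^{p^{kt}+1} equals p^{k} · p^{2kt}. -/

import Mathlib

open Polynomial Finset

lemma aux_root_card_le {F : Type*} [Field F] [Fintype F] (P : Polynomial F) (hP : P ≠ 0) :
    Nat.card {z : F // Polynomial.eval z P = 0} ≤ P.natDegree := by
  classical
  rw [Nat.card_eq_fintype_card, Fintype.card_subtype]
  refine le_trans (le_trans (Finset.card_le_card ?_) (Multiset.toFinset_card_le P.roots))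
    (Polynomial.card_roots' P)
  intro z hz
  simp only [Finset.mem_filter, Finset.mem_univ, true_and] at hz
  simp [Polynomial.mem_roots hP, Polynomial.IsRoot, hz]

theorem stmt_9 (p k t : ℕ) (hp : p.Prime) (hodd : Odd p) (hk : 0 < k)
    (ht : Odd t) (htpos : 0 < t)
    (F : Type*) [Field F] [Fintype F] (hF : Fintype.card F = p ^ (2 * k * t))
    (μ : F) (hμ0 : μ ≠ 0) (hμsub : μ ^ p ^ (2 * k) = μ) (hμ : μ ^ p ^ k = -μ) :
    Nat.card {xy : F × F // xy.2 ^ p ^ k - xy.2 = μ * xy.1 ^ (p ^ (k * t) + 1)} =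
      p ^ k * p ^ (2 * k * t) := by
  classical
  haveI : Fact p.Prime := ⟨hp⟩
  have h2kt : 0 < 2 * k * t := by positivity
  haveI hchar : CharP F p := by
    obtain ⟨n, hp', hcard⟩ := FiniteField.card F (ringChar F)
    have hdvd : p ∣ (ringChar F) ^ (n : ℕ) := by
      rw [← hcard, hF]; exact dvd_pow_self p h2kt.ne'
    have : p = ringChar F :=
      (Nat.prime_dvd_prime_iff_eq hp hp').mp (hp.dvd_of_dvd_pow hdvd)
    rw [this]; exact ringChar.charP F
  have hp2 : 2 ≤ p := hp.two_le
  have hq2 : 2 ≤ p ^ k := le_trans hp2 (Nat.le_self_pow hk.ne' p)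
  have hqodd : ∀ n : ℕ, Odd (p ^ n) := fun n => hodd.pow
  -- the additive map φ
  let φ : F →+ F := AddMonoidHom.mk' (fun y => y ^ p ^ k - y) (fun a b => by
    show (a + b) ^ p ^ k - (a + b) = (a ^ p ^ k - a) + (b ^ p ^ k - b)
    rw [add_pow_char_pow]; ring)
  have φdef : ∀ y : F, φ y = y ^ p ^ k - y := fun y => rfl
  -- kernel card bound
  have hker_le : Nat.card φ.ker ≤ p ^ k := by
    have e : (φ.ker : Type _) ≃
        {z : F // Polynomial.eval z (X ^ p ^ k - X : F[X]) = 0} :=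
      Equiv.subtypeEquivRight (fun z => by
        simp [AddMonoidHom.mem_ker, φdef])
    have hdeg : ((X : F[X]) ^ p ^ k - X).natDegree = p ^ k := by
      rw [natDegree_sub_eq_left_of_natDegree_lt (by simp; omega), natDegree_X_pow]
    have hne : ((X : F[X]) ^ p ^ k - X) ≠ 0 := by
      intro h
      rw [h] at hdeg
      simp at hdeg
      omega
    calc Nat.card φ.ker = _ := Nat.card_congr e
      _ ≤ _ := aux_root_card_le _ hne
      _ = p ^ k := hdeg
  -- the trace-like map ψ as a set
  have key : ∀ y : F, ∑ i ∈ Finset.range (2 * t), (y ^ p ^ k - y) ^ p ^ (k * i) = 0 := by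
    intro y
    have h1 : ∀ i, (y ^ p ^ k - y) ^ p ^ (k * i)
        = y ^ p ^ (k * (i + 1)) - y ^ p ^ (k * i) := by
      intro i
      rw [sub_pow_char_pow, ← pow_mul, ← pow_add]
      have : k + k * i = k * (i + 1) := by ring
      rw [this]
    simp only [h1]
    rw [Finset.sum_range_sub (fun i => y ^ p ^ (k * i))]
    have : k * (2 * t) = 2 * k * t := by ring
    rw [this, ← hF, FiniteField.pow_card]
    simp
  -- the trace polynomial
  have hψ_card : Nat.card {c : F // ∑ i ∈ Finset.range (2 * t), c ^ p ^ (k * i) = 0}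
      ≤ p ^ (k * (2 * t - 1)) := by
    set P2 : F[X] := ∑ i ∈ Finset.range (2 * t), X ^ p ^ (k * i) with hP2
    have hcoeff : P2.coeff (p ^ (k * (2 * t - 1))) = 1 := by
      rw [hP2, finset_sum_coeff]
      rw [Finset.sum_eq_single_of_mem (2 * t - 1) (Finset.mem_range.mpr (by omega))]
      · simp [coeff_X_pow]
      · intro b hb hbne
        rw [coeff_X_pow, if_neg]
        intro hEq
        have := Nat.pow_right_injective hp2 hEq
        exact hbne (Nat.eq_of_mul_eq_mul_left hk this.symm)
    have hne : P2 ≠ 0 := fun h => by simp [h] at hcoeff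
    have hdegle : P2.natDegree ≤ p ^ (k * (2 * t - 1)) := by
      refine Polynomial.natDegree_sum_le_of_forall_le _ _ (fun i hi => ?_)
      rw [natDegree_X_pow]
      exact Nat.pow_le_pow_right (by omega)
        (Nat.mul_le_mul_left k (by simp at hi; omega))
    have e : {c : F // ∑ i ∈ Finset.range (2 * t), c ^ p ^ (k * i) = 0}
        ≃ {z : F // Polynomial.eval z P2 = 0} :=
      Equiv.subtypeEquivRight (fun z => by simp [hP2, eval_finset_sum])
    calc Nat.card _ = _ := Nat.card_congr e
      _ ≤ P2.natDegree := aux_root_card_le _ hne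
      _ ≤ _ := hdegle
  -- range ⊆ kernel of ψ
  have hrange_sub : (φ.range : Set F) ⊆
      {c : F | ∑ i ∈ Finset.range (2 * t), c ^ p ^ (k * i) = 0} := by
    rintro c ⟨y, rfl⟩
    exact key y
  -- cardinal bookkeeping
  have h1 : Nat.card F = Nat.card φ.range * Nat.card φ.ker := by
    rw [AddSubgroup.card_eq_card_quotient_mul_card_addSubgroup φ.ker]
    congr 1
    exact Nat.card_congr (QuotientAddGroup.quotientKerEquivRange φ).toEquiv
  have hcardF : Nat.card F = p ^ (2 * k * t) := by
    rw [Nat.card_eq_fintype_card, hF]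
  have hrange_le : Nat.card φ.range ≤ p ^ (k * (2 * t - 1)) := by
    refine le_trans (Nat.card_le_card_of_injective
      (fun r : φ.range => (⟨r.1, hrange_sub r.2⟩ :
        {c : F // ∑ i ∈ Finset.range (2 * t), c ^ p ^ (k * i) = 0})) ?_) hψ_card
    intro a b hab
    simp only [Subtype.mk.injEq] at hab
    exact Subtype.ext hab
  have hsplit : p ^ (k * (2 * t - 1)) * p ^ k = p ^ (2 * k * t) := by
    rw [← pow_add]
    congr 1
    have : 2 * t - 1 + 1 = 2 * t := by omega
    calc k * (2 * t - 1) + k = k * (2 * t - 1 + 1) := by ring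
      _ = 2 * k * t := by rw [this]; ring
  have hRmaxpos : 0 < p ^ (k * (2 * t - 1)) := Nat.pow_pos (by omega)
  have hqpos : 0 < p ^ k := Nat.pow_pos (by omega)
  have hmul : p ^ (k * (2 * t - 1)) * p ^ k = Nat.card φ.range * Nat.card φ.ker := by
    rw [hsplit, ← hcardF, h1]
  have hker_ge : p ^ k ≤ Nat.card φ.ker := by
    have h3 : Nat.card φ.range * Nat.card φ.ker ≤
        p ^ (k * (2 * t - 1)) * Nat.card φ.ker :=
      Nat.mul_le_mul_right _ hrange_le
    rw [← hmul] at h3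
    exact Nat.le_of_mul_le_mul_left h3 hRmaxpos
  have hK_eq : Nat.card φ.ker = p ^ k := le_antisymm hker_le hker_ge
  have hrange_ge : p ^ (k * (2 * t - 1)) ≤ Nat.card φ.range := by
    have h3 : Nat.card φ.range * Nat.card φ.ker ≤ Nat.card φ.range * p ^ k :=
      Nat.mul_le_mul_left _ hker_le
    rw [← hmul] at h3
    exact Nat.le_of_mul_le_mul_right h3 hqpos
  have hR_eq : Nat.card φ.range = p ^ (k * (2 * t - 1)) :=
    le_antisymm hrange_le hrange_ge
  -- range = kernel of ψ
  have hsets : (φ.range : Set F) =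
      {c : F | ∑ i ∈ Finset.range (2 * t), c ^ p ^ (k * i) = 0} := by
    apply Set.eq_of_subset_of_ncard_le hrange_sub
    · rw [← Nat.card_coe_set_eq, ← Nat.card_coe_set_eq]
      have : Nat.card (φ.range : Set F) = Nat.card φ.range := Nat.card_congr (Equiv.refl _)
      rw [this, hR_eq]
      exact hψ_card
  -- μ ^ (p^(k*j)) = (-1)^j * μ
  have hμj : ∀ j : ℕ, μ ^ p ^ (k * j) = (-1) ^ j * μ := by
    intro j
    induction j with
    | zero => simp
    | succ n ih =>
      have h1 : p ^ (k * (n + 1)) = p ^ (k * n) * p ^ k := by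
        rw [← pow_add, Nat.mul_succ]
      rw [h1, pow_mul, ih, mul_pow, hμ, ← pow_mul, mul_comm n (p ^ k), pow_mul,
        (hqodd k).neg_pow, one_pow, pow_succ]
      ring
  -- existence of a solution for each x
  have hex : ∀ x : F, ∃ y : F, y ^ p ^ k - y = μ * x ^ (p ^ (k * t) + 1) := by
    intro x
    set c : F := μ * x ^ (p ^ (k * t) + 1) with hc
    have hct : c ^ p ^ (k * t) = -c := by
      rw [hc, mul_pow, ← pow_mul]
      have he : (p ^ (k * t) + 1) * p ^ (k * t) = p ^ (2 * k * t) + p ^ (k * t) := by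
        rw [add_mul, one_mul, ← pow_add]
        have : k * t + k * t = 2 * k * t := by ring
        rw [this]
      rw [he, pow_add, ← hF, FiniteField.pow_card, hμj t, ht.neg_one_pow]
      ring
    have hψc : ∑ i ∈ Finset.range (2 * t), c ^ p ^ (k * i) = 0 := by
      have h2t : 2 * t = t + t := by ring
      rw [h2t, Finset.sum_range_add]
      have hshift : ∀ i : ℕ, c ^ p ^ (k * (t + i)) = -(c ^ p ^ (k * i)) := by
        intro i
        have h1 : p ^ (k * (t + i)) = p ^ (k * t) * p ^ (k * i) := by
          rw [← pow_add]; congr 1; ring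
        rw [h1, pow_mul, hct, (hqodd (k * i)).neg_pow]
      simp [hshift]
    have hcmem : c ∈ (φ.range : Set F) := by
      rw [hsets]; exact hψc
    obtain ⟨y, hy⟩ := hcmem
    exact ⟨y, hy⟩
  -- each fiber has p^k elements
  have hfib : ∀ x : F,
      Nat.card {y : F // y ^ p ^ k - y = μ * x ^ (p ^ (k * t) + 1)} = p ^ k := by
    intro x
    obtain ⟨y₀, hy₀⟩ := hex x
    have e : {y : F // y ^ p ^ k - y = μ * x ^ (p ^ (k * t) + 1)} ≃ φ.ker :=
      { toFun := fun y => ⟨y.1 - y₀, by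
          rw [AddMonoidHom.mem_ker, map_sub, φdef, φdef, y.2, hy₀, sub_self]⟩
        invFun := fun z => ⟨z.1 + y₀, by
          show φ (↑z + y₀) = μ * x ^ (p ^ (k * t) + 1)
          rw [map_add, AddMonoidHom.mem_ker.mp z.2, zero_add, φdef]
          exact hy₀⟩
        left_inv := fun y => by simp
        right_inv := fun z => by simp }
    rw [Nat.card_congr e, hK_eq]
  -- final count
  rw [Nat.card_eq_fintype_card,
    Fintype.card_congr (Equiv.subtypeProdEquivSigmaSubtype
      (fun a b : F => b ^ p ^ k - b = μ * a ^ (p ^ (k * t) + 1))),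
    Fintype.card_sigma]
  have hfib' : ∀ x : F,
      Fintype.card {y : F // y ^ p ^ k - y = μ * x ^ (p ^ (k * t) + 1)} = p ^ k := by
    intro x
    rw [← Nat.card_eq_fintype_card]
    exact hfib x
  simp only [hfib']
  rw [Finset.sum_const, smul_eq_mul, Finset.card_univ, hF]
  ring
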